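/- For an operator precedence alphabet (Σ, M) with M conflict-free, any word a₀ x a_{n+1} admits at most one decomposition as the body of a chain: if ⌈a₀⌉ x ⌊a_{n+1}⌋ is a chain, then the partition of x into x₀ a₁ x₁ … aₙ xₙ with ⌈a₀⌉ a₁…aₙ ⌊a_{n+1}⌋ a simple chain and each xᵢ empty or a chain body is unique. -/

import Mathlib

/-! # Preliminaries: precedence relations, Floyd automata, chains, supports,
operator (Floyd) grammars. -/

/-- The three operator precedence relations. -/
inductive PrecRel : Type
  | lt  -- ⋖ , yields precedence
  | eq  -- ≐ , equal in precedence
  | gt  -- ⋗ , takes precedence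
deriving DecidableEq

/-- A (nondeterministic) Floyd automaton over a precedence alphabet `(T, M)`.
`none` plays the role of the delimiter `#`. -/
structure FloydAutomaton (T : Type*) (Q : Type*) where
  /-- conflict-free operator precedence matrix over `T ∪ {#}` -/
  M : Option T → Option T → Option PrecRel
  /-- initial states -/
  init : Set Q
  /-- final states -/
  final : Set Q
  /-- push transition function -/
  push : Q → T → Set Q
  /-- flush transition function -/
  flush : Q → Q → Set Q

namespace FloydAutomaton

/-- A configuration: the bottom stack symbol `(#, base)` is represented by `base`,
the rest of the stack is a list (top = head) of triples (marked?, symbol, state),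
and `input` is the remaining input (the trailing `#` is implicit). -/
structure Config (T : Type*) (Q : Type*) where
  base : Q
  stack : List (Bool × T × Q)
  input : List T

variable {T Q : Type*}

/-- Symbol on top of the stack (`none` = `#`). -/
def Config.topSym (c : Config T Q) : Option T := c.stack.head?.map (fun s => s.2.1)

/-- State on top of the stack. -/
def Config.topState (c : Config T Q) : Q := ((c.stack.head?.map (fun s => s.2.2)).getD c.base)

/-- Number of marked symbols on the stack. -/
def Config.marked (c : Config T Q) : ℕ := c.stack.countP (fun s => s.1)

variable (A : FloydAutomaton T Q)

/-- One move of a Floyd automaton: push (top ≐ current), mark (top ⋖ current),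
flush (top ⋗ current). -/
inductive Step : Config T Q → Config T Q → Prop
  | push {b : Q} {st : List (Bool × T × Q)} {w : List T} {q : Q} (a : T) :
      A.M (Config.topSym ⟨b, st, a :: w⟩) (some a) = some PrecRel.eq →
      q ∈ A.push (Config.topState ⟨b, st, a :: w⟩) a →
      Step ⟨b, st, a :: w⟩ ⟨b, (false, a, q) :: st, w⟩
  | mark {b : Q} {st : List (Bool × T × Q)} {w : List T} {q : Q} (a : T) :
      A.M (Config.topSym ⟨b, st, a :: w⟩) (some a) = some PrecRel.lt →
      q ∈ A.push (Config.topState ⟨b, st, a :: w⟩) a →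
      Step ⟨b, st, a :: w⟩ ⟨b, (true, a, q) :: st, w⟩
  | flushMid {b : Q} {pre : List (Bool × T × Q)} {x : T} {qm : Q}
      {s : Bool × T × Q} {rest : List (Bool × T × Q)} {w : List T} {q : Q} :
      (∀ p ∈ pre, p.1 = false) →
      A.M (Config.topSym ⟨b, pre ++ (true, x, qm) :: s :: rest, w⟩) w.head? = some PrecRel.gt →
      q ∈ A.flush (Config.topState ⟨b, pre ++ (true, x, qm) :: s :: rest, w⟩) s.2.2 →
      Step ⟨b, pre ++ (true, x, qm) :: s :: rest, w⟩ ⟨b, (s.1, s.2.1, q) :: rest, w⟩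
  | flushBot {b : Q} {pre : List (Bool × T × Q)} {x : T} {qm : Q} {w : List T} {q : Q} :
      (∀ p ∈ pre, p.1 = false) →
      A.M (Config.topSym ⟨b, pre ++ [(true, x, qm)], w⟩) w.head? = some PrecRel.gt →
      q ∈ A.flush (Config.topState ⟨b, pre ++ [(true, x, qm)], w⟩) b →
      Step ⟨b, pre ++ [(true, x, qm)], w⟩ ⟨q, [], w⟩

/-- Acceptance of a finite word. -/
def Accepts (x : List T) : Prop :=
  ∃ qI ∈ A.init, ∃ qF ∈ A.final,
    Relation.ReflTransGen A.Step ⟨qI, [], x⟩ ⟨qF, [], []⟩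

/-- The language recognized by a Floyd automaton. -/
def language : Set (List T) := { x | A.Accepts x }

/-- A Floyd automaton is deterministic iff it has one initial state and all
transition functions yield at most one state. -/
def Deterministic : Prop :=
  (∃ q, A.init = {q}) ∧ (∀ q a, (A.push q a).Subsingleton) ∧
    (∀ q p, (A.flush q p).Subsingleton)

/-- States of the powerset determinization: a lookback symbol together with a set
of pairs of states (`none` in the second component is `⊥`). -/
abbrev DetState (T : Type*) (Q : Type*) := Option T × Set (Q × Option Q)

/-- Push transition of the determinization. -/
def detPushF (s : DetState T Q) (a : T) : DetState T Q :=
  (some a, { ht | ∃ q p, (q, p) ∈ s.2 ∧ ht.1 ∈ A.push q a ∧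
      ((A.M s.1 (some a) = some PrecRel.lt ∧ ht.2 = some q) ∨
       (A.M s.1 (some a) = some PrecRel.eq ∧ ht.2 = p)) })

/-- Flush transition of the determinization. -/
def detFlushF (s₁ s₂ : DetState T Q) : DetState T Q :=
  (s₂.1, { hp | ∃ r q, (r, some q) ∈ s₁.2 ∧ (q, hp.2) ∈ s₂.2 ∧ hp.1 ∈ A.flush r q })

/-- The powerset determinization of a Floyd automaton. -/
def det : FloydAutomaton T (DetState T Q) where
  M := A.M
  init := {(none, { p | p.2 = none ∧ p.1 ∈ A.init })}
  final := { s | s.1 = none ∧ ∃ q ∈ A.final, (q, none) ∈ s.2 }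
  push := fun s a => {A.detPushF s a}
  flush := fun s₁ s₂ => {A.detFlushF s₁ s₂}

end FloydAutomaton

section Chains

variable {T : Type*}

mutual
/-- `ChainB M a₀ y b` : the word `y` is the body of a (simple or composed) chain
`⌈a₀⌉ y ⌊b⌋` over the precedence alphabet `(T, M)`. -/
inductive ChainB (M : Option T → Option T → Option PrecRel) :
    Option T → List T → Option T → Prop
  | head0 {a₀ b : Option T} {a₁ : T} {y : List T} :
      M a₀ b ≠ none →
      M a₀ (some a₁) = some PrecRel.lt →
      ChainT M a₁ y b →
      ChainB M a₀ (a₁ :: y) b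
  | head {a₀ b : Option T} {a₁ : T} {x₀ y : List T} :
      M a₀ b ≠ none →
      M a₀ (some a₁) = some PrecRel.lt →
      ChainB M a₀ x₀ (some a₁) →
      ChainT M a₁ y b →
      ChainB M a₀ (x₀ ++ a₁ :: y) b

/-- Auxiliary: tail of a chain body, after a skeleton symbol `a`. -/
inductive ChainT (M : Option T → Option T → Option PrecRel) :
    T → List T → Option T → Prop
  | last0 {a : T} {b : Option T} :
      M (some a) b = some PrecRel.gt →
      ChainT M a [] b
  | last {a : T} {xn : List T} {b : Option T} :
      ChainB M (some a) xn b →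
      M (some a) b = some PrecRel.gt →
      ChainT M a xn b
  | cons0 {a a' : T} {y : List T} {b : Option T} :
      M (some a) (some a') = some PrecRel.eq →
      ChainT M a' y b →
      ChainT M a (a' :: y) b
  | cons {a a' : T} {x y : List T} {b : Option T} :
      M (some a) (some a') = some PrecRel.eq →
      ChainB M (some a) x (some a') →
      ChainT M a' y b →
      ChainT M a (x ++ a' :: y) b
end

/-- `SimpleBody M a₀ l b` : `l` is the body `a₁ … aₙ` of a simple chain
`⌈a₀⌉ a₁ … aₙ ⌊b⌋`, i.e. `a₀ ⋖ a₁ ≐ … ≐ aₙ ⋗ b` with `M a₀ b` defined. -/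
def SimpleBody (M : Option T → Option T → Option PrecRel)
    (a₀ : Option T) (l : List T) (b : Option T) : Prop :=
  (l ≠ []) ∧ M a₀ b ≠ none ∧
  (∀ h : l ≠ [], M a₀ (some (l.head h)) = some PrecRel.lt ∧
      M (some (l.getLast h)) b = some PrecRel.gt) ∧
  List.Chain' (fun x y => M (some x) (some y) = some PrecRel.eq) l

/-- `≐`-acyclicity of a precedence matrix. -/
def EqAcyclic (M : Option T → Option T → Option PrecRel) : Prop :=
  ∀ x : Option T, ¬ Relation.TransGen (fun u v => M u v = some PrecRel.eq) x x

variable {Q : Type*}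

mutual
/-- `Supp A q y q'` : the automaton `A` has a support labelled by the chain body `y`
leading from state `q` to state `q'`, ending with a flush labelled by the state
reached after the first filler. -/
inductive Supp (A : FloydAutomaton T Q) : Q → List T → Q → Prop
  | head0 {q₀ q₁ qf : Q} {a₁ : T} {y : List T} :
      q₁ ∈ A.push q₀ a₁ →
      SuppT A q₀ q₁ y qf →
      Supp A q₀ (a₁ :: y) qf
  | head {q₀ q₀' q₁ qf : Q} {a₁ : T} {x₀ y : List T} :
      Supp A q₀ x₀ q₀' →
      q₁ ∈ A.push q₀' a₁ →
      SuppT A q₀' q₁ y qf →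
      Supp A q₀ (x₀ ++ a₁ :: y) qf

/-- Auxiliary: the tail of a support; the first argument after `A` is the label
of the final flush. -/
inductive SuppT (A : FloydAutomaton T Q) : Q → Q → List T → Q → Prop
  | last0 {q₀' qn qf : Q} :
      qf ∈ A.flush qn q₀' →
      SuppT A q₀' qn [] qf
  | last {q₀' qn q' qf : Q} {xn : List T} :
      Supp A qn xn q' →
      qf ∈ A.flush q' q₀' →
      SuppT A q₀' qn xn qf
  | cons0 {q₀' qi q'' qf : Q} {a : T} {y : List T} :
      q'' ∈ A.push qi a →
      SuppT A q₀' q'' y qf →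
      SuppT A q₀' qi (a :: y) qf
  | cons {q₀' qi q' q'' qf : Q} {a : T} {x y : List T} :
      Supp A qi x q' →
      q'' ∈ A.push q' a →
      SuppT A q₀' q'' y qf →
      SuppT A q₀' qi (x ++ a :: y) qf
end

end Chains

section Grammar

variable {T : Type*}

open Symbol in
/-- A symbol is a nonterminal. -/
def IsNT {N : Type*} : Symbol T N → Prop
  | Symbol.nonterminal _ => True
  | Symbol.terminal _ => False

/-- A string over `Σ ∪ N` has no two adjacent nonterminals. -/
def NoAdjNT {N : Type*} (l : List (Symbol T N)) : Prop :=
  List.Chain' (fun x y => ¬(IsNT x ∧ IsNT y)) l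

/-- An operator grammar: no right-hand side contains two adjacent nonterminals. -/
def OperatorGrammar (g : ContextFreeGrammar T) : Prop :=
  ∀ r ∈ g.rules, NoAdjNT r.output

/-- The equal-in-precedence relation `a ≐ b` of a grammar. -/
def GEq (g : ContextFreeGrammar T) (a b : T) : Prop :=
  ∃ r ∈ g.rules, ∃ α mid β,
    r.output = α ++ Symbol.terminal a :: (mid ++ Symbol.terminal b :: β) ∧
    (mid = [] ∨ ∃ B, mid = [Symbol.nonterminal B])

/-- The left terminal set: `a ∈ 𝓛(A)` iff `A ⇒* B a α` with `B ∈ N ∪ {ε}`. -/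
def LTerm (g : ContextFreeGrammar T) (A : g.NT) (a : T) : Prop :=
  ∃ pre α, g.Derives [Symbol.nonterminal A] (pre ++ Symbol.terminal a :: α) ∧
    (pre = [] ∨ ∃ B, pre = [Symbol.nonterminal B])

/-- The right terminal set: `a ∈ 𝓡(A)` iff `A ⇒* α a B` with `B ∈ N ∪ {ε}`. -/
def RTerm (g : ContextFreeGrammar T) (A : g.NT) (a : T) : Prop :=
  ∃ α post, g.Derives [Symbol.nonterminal A] (α ++ Symbol.terminal a :: post) ∧
    (post = [] ∨ ∃ B, post = [Symbol.nonterminal B])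

/-- The yields-precedence relation `a ⋖ b` of a grammar. -/
def GLt (g : ContextFreeGrammar T) (a b : T) : Prop :=
  ∃ r ∈ g.rules, ∃ α β D,
    r.output = α ++ Symbol.terminal a :: Symbol.nonterminal D :: β ∧ LTerm g D b

/-- The takes-precedence relation `a ⋗ b` of a grammar. -/
def GGt (g : ContextFreeGrammar T) (a b : T) : Prop :=
  ∃ r ∈ g.rules, ∃ α β D,
    r.output = α ++ Symbol.nonterminal D :: Symbol.terminal b :: β ∧ RTerm g D a

/-- Conflict-freeness: for each pair of terminals at most one precedence relation holds. -/
def ConflictFree (g : ContextFreeGrammar T) : Prop :=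
  ∀ a b : T, ¬(GEq g a b ∧ GLt g a b) ∧ ¬(GEq g a b ∧ GGt g a b) ∧
    ¬(GLt g a b ∧ GGt g a b)

/-- A Floyd (operator precedence) grammar. -/
def FloydGrammar (g : ContextFreeGrammar T) : Prop :=
  OperatorGrammar g ∧ ConflictFree g

end Grammar


variable {T : Type*}

/-- The body determined by a decomposition `x₀ a₁ x₁ … aₙ xₙ`
(`parts = [(x₀,a₁),…,(x_{n-1},aₙ)]`, last filler `xn`). -/
def decompBody (parts : List (List T × T)) (xn : List T) : List T :=
  (parts.map (fun p => p.1 ++ [p.2])).flatten ++ xn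

/-- `IsDecomp M a₀ parts xn b` : the decomposition `x₀ a₁ x₁ … aₙ xₙ` witnesses
that its body is a chain body from `a₀` to `b`: the skeleton `a₁ … aₙ` is a
simple chain body and every filler is empty or a chain body. -/
def IsDecomp (M : Option T → Option T → Option PrecRel)
    (a₀ : Option T) (parts : List (List T × T)) (xn : List T) (b : Option T) :
    Prop :=
  SimpleBody M a₀ (parts.map Prod.snd) b ∧
  (∀ p, parts.head? = some p → (p.1 = [] ∨ ChainB M a₀ p.1 (some p.2))) ∧
  List.Chain' (fun p q => q.1 = [] ∨ ChainB M (some p.2) q.1 (some q.2)) parts ∧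
  (∀ an, (parts.map Prod.snd).getLast? = some an →
    (xn = [] ∨ ChainB M (some an) xn b))

section ChainDecompAux

variable {M : Option T → Option T → Option PrecRel}

lemma chainB_ne_nil {α ξ : Option T} {z : List T} (h : ChainB M α z ξ) : z ≠ [] := by
  cases h <;> simp

/-- top-layer inversion for chain bodies -/
lemma chainB_layer {α ξ : Option T} {z : List T} (h : ChainB M α z ξ) :
    ∃ (u : List T) (g : T) (σ : List T), z = u ++ g :: σ ∧
      (u = [] ∨ ChainB M α u (some g)) ∧ M α (some g) = some PrecRel.lt ∧
      ChainT M g σ ξ := by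
  cases h with
  | head0 hne hlt hT => exact ⟨[], _, _, rfl, Or.inl rfl, hlt, hT⟩
  | head hne hlt hB hT => exact ⟨_, _, _, rfl, Or.inr hB, hlt, hT⟩

/-- first-step inversion for chain tails -/
lemma chainT_inv {d : T} {t : List T} {ξ : Option T} (h : ChainT M d t ξ) :
    (t = [] ∧ M (some d) ξ = some PrecRel.gt) ∨
    (ChainB M (some d) t ξ ∧ M (some d) ξ = some PrecRel.gt) ∨
    (∃ w e y, t = w ++ e :: y ∧ (w = [] ∨ ChainB M (some d) w (some e)) ∧
      M (some d) (some e) = some PrecRel.eq ∧ ChainT M e y ξ) := by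
  cases h with
  | last0 hgt => exact Or.inl ⟨rfl, hgt⟩
  | last hB hgt => exact Or.inr (Or.inl ⟨hB, hgt⟩)
  | cons0 hrel hT => exact Or.inr (Or.inr ⟨[], _, _, rfl, Or.inl rfl, hrel, hT⟩)
  | cons hrel hB hT => exact Or.inr (Or.inr ⟨_, _, _, rfl, Or.inr hB, hrel, hT⟩)

lemma chainB_head : ∀ n : ℕ, ∀ {z : List T}, z.length ≤ n → ∀ {α ξ : Option T} {a : T}
    {tl : List T}, ChainB M α z ξ → z = a :: tl → M α (some a) = some PrecRel.lt := by
  intro n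
  induction n with
  | zero =>
    intro z hz α ξ a tl h he
    subst he; simp at hz
  | succ n ih =>
    intro z hz α ξ a tl h he
    obtain ⟨u, g, σ, hzeq, hu, hlt, hT⟩ := chainB_layer h
    rcases hu with rfl | hB
    · rw [hzeq] at he
      simp only [List.nil_append] at he
      injection he with h1 h2
      subst h1; exact hlt
    · cases hu' : u with
      | nil => exact absurd hu' (chainB_ne_nil hB)
      | cons hd tl' =>
        subst hu'
        rw [hzeq] at he
        simp only [List.cons_append] at he
        injection he with h1 h2
        subst h1
        refine ih ?_ hB rfl
        have := congrArg List.length hzeq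
        simp at this hz ⊢; omega

/-- splitting a list written in two ways around a distinguished element -/
lemma split3 {β : Type*} : ∀ {u u' σ σ' : List β} {g g' : β},
    u ++ g :: σ = u' ++ g' :: σ' →
    (u = u' ∧ g = g' ∧ σ = σ') ∨
    (∃ δ, u' = u ++ g :: δ ∧ σ = δ ++ g' :: σ') ∨
    (∃ δ, u = u' ++ g' :: δ ∧ σ' = δ ++ g :: σ) := by
  intro u
  induction u with
  | nil =>
    intro u' σ σ' g g' h
    cases u' with
    | nil => simp_all
    | cons h' t' =>
      simp only [List.nil_append, List.cons_append] at h
      injection h with h1 h2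
      subst h1; subst h2
      exact Or.inr (Or.inl ⟨t', by simp⟩)
  | cons hd tl ih =>
    intro u' σ σ' g g' h
    cases u' with
    | nil =>
      simp only [List.cons_append, List.nil_append] at h
      injection h with h1 h2
      subst h1; subst h2
      exact Or.inr (Or.inr ⟨tl, by simp⟩)
    | cons h' t' =>
      simp only [List.cons_append] at h
      injection h with h1 h2
      subst h1
      rcases ih h2 with ⟨rfl, rfl, rfl⟩ | ⟨δ, rfl, rfl⟩ | ⟨δ, rfl, rfl⟩
      · exact Or.inl ⟨rfl, rfl, rfl⟩
      · exact Or.inr (Or.inl ⟨δ, by simp⟩)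
      · exact Or.inr (Or.inr ⟨δ, by simp⟩)

/-- The three mutually-inductive overhang-impossibility statements, proved by
strong induction on the sum of the lengths of the two words involved.
D: a chain body from `α` cannot end strictly past the first skeleton symbol of
   another layer structure from `α` over the same word.
E: a chain body from `α` whose right symbol is not `⋖`-related to `α` cannot be
   an initial segment (together with its right symbol) of another chain body from `α`.
A: a tail from `d` cannot end strictly inside another tail from `d`. -/
theorem big (M : Option T → Option T → Option PrecRel) : ∀ n : ℕ,
    (∀ (α : Option T) (x₀ : List T) (a₁ : T) (y : List T) (b : Option T)
       (x₂ : List T) (c₂ : T) (r : List T),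
       (x₀ = [] ∨ ChainB M α x₀ (some a₁)) → ChainT M a₁ y b →
       ChainB M α x₂ (some c₂) → x₀ ++ a₁ :: y = x₂ ++ c₂ :: r →
       x₀.length < x₂.length → x₂.length + (x₀.length + 1 + y.length) ≤ n → False) ∧
    (∀ (α : Option T) (x₁ : List T) (c₁ : T) (x₂ : List T) (ξ : Option T) (r : List T),
       ChainB M α x₁ (some c₁) → M α (some c₁) ≠ some PrecRel.lt →
       ChainB M α x₂ ξ → x₂ = x₁ ++ c₁ :: r →
       x₁.length + x₂.length ≤ n → False) ∧
    (∀ (d c₁ : T) (t₁ r t₂ : List T) (ξ : Option T),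
       ChainT M d t₁ (some c₁) → ChainT M d t₂ ξ → t₂ = t₁ ++ c₁ :: r →
       t₁.length + t₂.length ≤ n → False) := by
  intro n
  induction n using Nat.strong_induction_on with
  | _ n ih =>
  -- D --------------------------------------------------------------
  have hD : ∀ (α : Option T) (x₀ : List T) (a₁ : T) (y : List T) (b : Option T)
      (x₂ : List T) (c₂ : T) (r : List T),
      (x₀ = [] ∨ ChainB M α x₀ (some a₁)) → ChainT M a₁ y b →
      ChainB M α x₂ (some c₂) → x₀ ++ a₁ :: y = x₂ ++ c₂ :: r →
      x₀.length < x₂.length → x₂.length + (x₀.length + 1 + y.length) ≤ n → False := by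
    intro α x₀ a₁ y b x₂ c₂ r hx₀ hT hB heq hklt hlen
    obtain ⟨u₀, b₁, τ, hx₂eq, hu₀, hlt2, hT2⟩ := chainB_layer hB
    have hlenx₂ : x₂.length = u₀.length + 1 + τ.length := by
      rw [hx₂eq]; simp only [List.length_append, List.length_cons]; omega
    rw [hx₂eq, List.append_assoc, List.cons_append] at heq
    rcases split3 heq with ⟨h1, h2, h3⟩ | ⟨δ, h3, h4⟩ | ⟨δ, h3, h4⟩
    · -- aligned at the first skeleton symbol: recurse into the tails
      subst h2
      exact (ih (n-1) (by omega)).2.2 a₁ c₂ τ r y b hT2 hT h3 (by omega)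
    · -- the inner chain's first filler extends past a₁
      have hBu : ChainB M α u₀ (some b₁) := by
        rcases hu₀ with h | h
        · rw [h] at h3; exact absurd h3.symm (by simp)
        · exact h
      have hl3 := congrArg List.length h3
      simp only [List.length_append, List.length_cons] at hl3
      refine (ih (n-1) (by omega)).1 α x₀ a₁ y b u₀ b₁ (τ ++ c₂ :: r) hx₀ hT hBu
        (by rw [h3, h4]; simp) (by omega) ?_
      have hl4 := congrArg List.length h4
      simp only [List.length_append, List.length_cons] at hl4
      omega
    · -- the outer first filler x₀ extends past b₁ : swap the roles
      have hBx : ChainB M α x₀ (some a₁) := by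
        rcases hx₀ with h | h
        · exact absurd h (by rw [h3]; simp)
        · exact h
      have hl3 := congrArg List.length h3
      simp only [List.length_append, List.length_cons] at hl3
      rcases split3 h4.symm with ⟨h5, h6, h7⟩ | ⟨ρ, h5, h6⟩ | ⟨ρ, h5, h6⟩
      · -- x₂ = x₀ : contradicts the strict length inequality
        have hl5 := congrArg List.length h5
        omega
      · -- τ = δ ++ a₁ :: ρ : swap roles and recurse
        have hl5 := congrArg List.length h5
        simp only [List.length_append, List.length_cons] at hl5
        refine (ih (n-1) (by omega)).1 α u₀ b₁ τ (some c₂) x₀ a₁ ρ hu₀ hT2 hBx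
          (by rw [h3, h5]; simp) (by omega) (by omega)
      · -- δ = τ ++ c₂ :: ρ : impossible by lengths
        have hl5 := congrArg List.length h5
        simp only [List.length_append, List.length_cons] at hl5
        omega
  -- E --------------------------------------------------------------
  have hE : ∀ (α : Option T) (x₁ : List T) (c₁ : T) (x₂ : List T) (ξ : Option T) (r : List T),
      ChainB M α x₁ (some c₁) → M α (some c₁) ≠ some PrecRel.lt →
      ChainB M α x₂ ξ → x₂ = x₁ ++ c₁ :: r →
      x₁.length + x₂.length ≤ n → False := by
    intro α x₁ c₁ x₂ ξ r hB1 hnlt hB2 heq hlen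
    obtain ⟨u', g', σ', hx₂eq, hu', hlt2, hT2⟩ := chainB_layer hB2
    rw [heq] at hx₂eq
    have hlenx₂ : x₂.length = u'.length + 1 + σ'.length := by
      rw [heq, hx₂eq]; simp only [List.length_append, List.length_cons]; omega
    rcases split3 hx₂eq with ⟨rfl, rfl, rfl⟩ | ⟨δ, h3, h4⟩ | ⟨δ, h3, h4⟩
    · exact hnlt hlt2
    · have hBu : ChainB M α u' (some g') := by
        rcases hu' with h | h
        · exact absurd h (by rw [h3]; simp)
        · exact h
      have hl3 := congrArg List.length h3
      simp only [List.length_append, List.length_cons] at hl3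
      exact (ih (n-1) (by omega)).2.1 α x₁ c₁ u' (some g') δ hB1 hnlt hBu h3
        (by omega)
    · have hl3 := congrArg List.length h3
      simp only [List.length_append, List.length_cons] at hl3
      exact hD α u' g' σ' ξ x₁ c₁ r hu' hT2 hB1 (by rw [h3, h4]; simp)
        (by omega) (by omega)
  -- A --------------------------------------------------------------
  have hA : ∀ (d c₁ : T) (t₁ r t₂ : List T) (ξ : Option T),
      ChainT M d t₁ (some c₁) → ChainT M d t₂ ξ → t₂ = t₁ ++ c₁ :: r →
      t₁.length + t₂.length ≤ n → False := by
    intro d c₁ t₁ r t₂ ξ hT1 hT2 heq hlen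
    subst heq
    rcases chainT_inv hT2 with ⟨hnil, -⟩ | ⟨hB2, hgt2⟩ | ⟨w', e', y', hW, hw', hrel2, hT2'⟩
    · exact absurd hnil (by simp)
    · -- outer is a chain body over t₁ ++ c₁ :: r
      rcases chainT_inv hT1 with ⟨rfl, hgt1⟩ | ⟨hB1, hgt1⟩ | ⟨w, e, y₁, rfl, hw, hrel1, hT1'⟩
      · rw [List.nil_append] at hB2
        rw [chainB_head (c₁ :: r).length le_rfl hB2 rfl] at hgt1
        exact absurd hgt1 (by simp)
      · exact hE (some d) t₁ c₁ (t₁ ++ c₁ :: r) ξ r hB1 (by rw [hgt1]; simp) hB2 rfl hlen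
      · obtain ⟨u', g', σ', hWeq, hu', hlt2, hT2'⟩ := chainB_layer hB2
        rw [List.append_assoc, List.cons_append] at hWeq
        have hlW : w.length + 1 + (y₁.length + 1 + r.length) =
            u'.length + 1 + σ'.length := by
          have := congrArg List.length hWeq
          simp only [List.length_append, List.length_cons] at this
          omega
        rcases split3 hWeq with ⟨rfl, rfl, rfl⟩ | ⟨δ, h3, h4⟩ | ⟨δ, h3, h4⟩
        · rw [hlt2] at hrel1; exact absurd hrel1 (by simp)
        · have hBw : ChainB M (some d) w (some e) := by
            rcases hw with h | h
            · subst h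
              exfalso
              have hBu : ChainB M (some d) u' (some g') := by
                rcases hu' with h' | h'
                · exact absurd h' (by rw [h3]; simp)
                · exact h'
              rw [chainB_head u'.length le_rfl hBu (by simpa using h3)] at hrel1
              exact absurd hrel1 (by simp)
            · exact h
          have hl3 := congrArg List.length h3
          simp only [List.length_append, List.length_cons] at hl3
          exact hE (some d) w e u' (some g') δ hBw (by rw [hrel1]; simp) (by
            rcases hu' with h' | h'
            · exact absurd h' (by rw [h3]; simp)
            · exact h') h3 (by simp at hlen ⊢; omega)
        · have hBw : ChainB M (some d) w (some e) := by
            rcases hw with h | h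
            · exact absurd h (by rw [h3]; simp)
            · exact h
          have hl3 := congrArg List.length h3
          simp only [List.length_append, List.length_cons] at hl3
          exact hD (some d) u' g' σ' ξ w e (y₁ ++ c₁ :: r) hu' hT2' hBw
            (by rw [h3, h4]; simp) (by omega) (by simp at hlen ⊢; omega)
    · -- outer takes an ≐-step after the filler w'
      rcases chainT_inv hT1 with ⟨rfl, hgt1⟩ | ⟨hB1, hgt1⟩ | ⟨w, e, y₁, rfl, hw, hrel1, hT1'⟩
      · rcases split3 hW with ⟨rfl, rfl, rfl⟩ | ⟨δ, h3, h4⟩ | ⟨δ, h3, h4⟩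
        · rw [hrel2] at hgt1; exact absurd hgt1 (by simp)
        · have hBw : ChainB M (some d) w' (some e') := by
            rcases hw' with h | h
            · exact absurd h (by rw [h3]; simp)
            · exact h
          rw [chainB_head w'.length le_rfl hBw (by simpa using h3)] at hgt1
          exact absurd hgt1 (by simp)
        · exact absurd h3.symm (by simp)
      · rcases split3 hW with ⟨rfl, rfl, rfl⟩ | ⟨δ, h3, h4⟩ | ⟨δ, h3, h4⟩
        · rw [hrel2] at hgt1; exact absurd hgt1 (by simp)
        · have hBw : ChainB M (some d) w' (some e') := by
            rcases hw' with h | h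
            · exact absurd h (by rw [h3]; simp)
            · exact h
          have hl3 := congrArg List.length h3
          simp only [List.length_append, List.length_cons] at hl3
          have hl4 := congrArg List.length h4
          simp only [List.length_append, List.length_cons] at hl4
          exact hE (some d) t₁ c₁ w' (some e') δ hB1 (by rw [hgt1]; simp) hBw h3
            (by simp at hlen ⊢; omega)
        · have hl3 := congrArg List.length h3
          simp only [List.length_append, List.length_cons] at hl3
          have hl4 := congrArg List.length h4
          simp only [List.length_append, List.length_cons] at hl4
          exact hD (some d) w' e' y' ξ t₁ c₁ r hw' hT2' hB1 (by rw [h3, h4]; simp)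
            (by omega) (by simp at hlen ⊢; omega)
      · rw [List.append_assoc, List.cons_append] at hW
        rcases split3 hW with ⟨rfl, rfl, h5⟩ | ⟨δ, h3, h4⟩ | ⟨δ, h3, h4⟩
        · -- aligned : recurse on the tails
          exact (ih (n-1) (by simp at hlen; omega)).2.2 e c₁ y₁ r y' ξ hT1' hT2' h5.symm
            (by have := congrArg List.length h5; simp at this hlen ⊢; omega)
        · have hBw : ChainB M (some d) w (some e) := by
            rcases hw with h | h
            · subst h
              exfalso
              have hBw' : ChainB M (some d) w' (some e') := by
                rcases hw' with h' | h'
                · exact absurd h' (by rw [h3]; simp)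
                · exact h'
              rw [chainB_head w'.length le_rfl hBw' (by simpa using h3)] at hrel1
              exact absurd hrel1 (by simp)
            · exact h
          have hBw' : ChainB M (some d) w' (some e') := by
            rcases hw' with h' | h'
            · exact absurd h' (by rw [h3]; simp)
            · exact h'
          have hl3 := congrArg List.length h3
          simp only [List.length_append, List.length_cons] at hl3
          have hl4 := congrArg List.length h4
          simp only [List.length_append, List.length_cons] at hl4
          exact hE (some d) w e w' (some e') δ hBw (by rw [hrel1]; simp) hBw' h3
            (by simp at hlen ⊢; omega)
        · have hBw : ChainB M (some d) w (some e) := by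
            rcases hw with h | h
            · exact absurd h (by rw [h3]; simp)
            · exact h
          have hl3 := congrArg List.length h3
          simp only [List.length_append, List.length_cons] at hl3
          have hl4 := congrArg List.length h4
          simp only [List.length_append, List.length_cons] at hl4
          exact hD (some d) w' e' y' ξ w e (y₁ ++ c₁ :: r) hw' hT2' hBw
            (by rw [h3, h4]; simp) (by omega) (by simp at hlen ⊢; omega)
  exact ⟨hD, hE, hA⟩

/-- external interfaces -/
lemma masterE {α : Option T} {x₁ : List T} {c₁ : T} {x₂ : List T} {ξ : Option T} {r : List T}
    (hB1 : ChainB M α x₁ (some c₁)) (hnlt : M α (some c₁) ≠ some PrecRel.lt)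
    (hB2 : ChainB M α x₂ ξ) (heq : x₂ = x₁ ++ c₁ :: r) : False :=
  (big M (x₁.length + x₂.length)).2.1 α x₁ c₁ x₂ ξ r hB1 hnlt hB2 heq le_rfl

lemma masterD {α : Option T} {x₀ : List T} {a₁ : T} {y : List T} {b : Option T}
    {x₂ : List T} {c₂ : T} {r : List T}
    (hx₀ : x₀ = [] ∨ ChainB M α x₀ (some a₁)) (hT : ChainT M a₁ y b)
    (hB : ChainB M α x₂ (some c₂)) (heq : x₀ ++ a₁ :: y = x₂ ++ c₂ :: r)
    (hklt : x₀.length < x₂.length) : False :=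
  (big M (x₂.length + (x₀.length + 1 + y.length))).1 α x₀ a₁ y b x₂ c₂ r hx₀ hT hB heq
    hklt le_rfl

lemma decompBody_nil (xn : List T) : decompBody ([] : List (List T × T)) xn = xn := by
  simp [decompBody]

lemma decompBody_cons (w : List T) (e : T) (ps : List (List T × T)) (xn : List T) :
    decompBody ((w, e) :: ps) xn = w ++ e :: decompBody ps xn := by
  simp [decompBody]

lemma getLast?_cons_eq : ∀ (l : List T) (a : T), (a :: l).getLast? = some (l.getLastD a) := by
  intro l
  induction l with
  | nil => intro a; rfl
  | cons hd tl ih => intro a; rw [List.getLastD_cons]; exact ih hd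

lemma getLast_cons_eq : ∀ (l : List T) (a : T) (h : (a :: l) ≠ []),
    (a :: l).getLast h = l.getLastD a := by
  intro l
  induction l with
  | nil => intro a h; rfl
  | cons hd tl ih =>
    intro a h
    rw [List.getLast_cons (by simp), List.getLastD_cons]
    exact ih hd (by simp)

/-- assemble a tail decomposition into a `ChainT` -/
lemma assembleT : ∀ (ps : List (List T × T)) (a : T) (w0 xn : List T) (b : Option T),
    List.Chain (fun x y : T => M (some x) (some y) = some PrecRel.eq) a (ps.map Prod.snd) →
    List.Chain (fun p q : List T × T => q.1 = [] ∨ ChainB M (some p.2) q.1 (some q.2))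
      (w0, a) ps →
    M (some ((ps.map Prod.snd).getLastD a)) b = some PrecRel.gt →
    (xn = [] ∨ ChainB M (some ((ps.map Prod.snd).getLastD a)) xn b) →
    ChainT M a (decompBody ps xn) b := by
  intro ps
  induction ps with
  | nil =>
    intro a w0 xn b _ _ hgt hxn
    rw [decompBody_nil]
    rcases hxn with rfl | hB
    · exact ChainT.last0 hgt
    · exact ChainT.last hB hgt
  | cons p ps ih =>
    obtain ⟨w, e⟩ := p
    intro a w0 xn b hceq hcf hgt hxn
    rw [decompBody_cons]
    rw [List.map_cons, List.Chain, List.chain_cons] at hceq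
    obtain ⟨hae, hceq⟩ := hceq
    rw [List.Chain, List.chain_cons] at hcf
    obtain ⟨hw, hcf⟩ := hcf
    rw [List.map_cons, List.getLastD_cons] at hgt hxn
    have hT := ih e w xn b hceq hcf hgt hxn
    rcases hw with hw | hB
    · simp only at hw
      rw [hw, List.nil_append]
      exact ChainT.cons0 hae hT
    · exact ChainT.cons hae hB hT

/-- uniqueness of tail decompositions -/
lemma tail_uniq : ∀ n : ℕ, ∀ (a : T) (ps₁ ps₂ : List (List T × T)) (xn₁ xn₂ : List T)
    (b : Option T) (w₁ w₂ : List T),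
    List.Chain (fun x y : T => M (some x) (some y) = some PrecRel.eq) a (ps₁.map Prod.snd) →
    List.Chain (fun p q : List T × T => q.1 = [] ∨ ChainB M (some p.2) q.1 (some q.2))
      (w₁, a) ps₁ →
    M (some ((ps₁.map Prod.snd).getLastD a)) b = some PrecRel.gt →
    (xn₁ = [] ∨ ChainB M (some ((ps₁.map Prod.snd).getLastD a)) xn₁ b) →
    List.Chain (fun x y : T => M (some x) (some y) = some PrecRel.eq) a (ps₂.map Prod.snd) →
    List.Chain (fun p q : List T × T => q.1 = [] ∨ ChainB M (some p.2) q.1 (some q.2))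
      (w₂, a) ps₂ →
    M (some ((ps₂.map Prod.snd).getLastD a)) b = some PrecRel.gt →
    (xn₂ = [] ∨ ChainB M (some ((ps₂.map Prod.snd).getLastD a)) xn₂ b) →
    decompBody ps₁ xn₁ = decompBody ps₂ xn₂ →
    (decompBody ps₁ xn₁).length ≤ n →
    ps₁ = ps₂ ∧ xn₁ = xn₂ := by
  intro n
  induction n using Nat.strong_induction_on with
  | _ n ih =>
  intro a ps₁ ps₂ xn₁ xn₂ b w₁ w₂ hceq₁ hcf₁ hgt₁ hxn₁ hceq₂ hcf₂ hgt₂ hxn₂ hbody hlen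
  cases ps₁ with
  | nil =>
    cases ps₂ with
    | nil =>
      rw [decompBody_nil, decompBody_nil] at hbody
      exact ⟨rfl, hbody⟩
    | cons p ps₂' =>
      obtain ⟨w, e⟩ := p
      exfalso
      rw [decompBody_nil, decompBody_cons] at hbody
      rw [List.map_cons, List.Chain, List.chain_cons] at hceq₂
      rw [List.Chain, List.chain_cons] at hcf₂
      simp only [List.map_nil, List.getLastD_nil] at hgt₁ hxn₁
      rcases hxn₁ with rfl | hB
      · exact absurd hbody.symm (by simp)
      · rcases hcf₂.1 with hw | hBw
        · simp only at hw
          rw [hw, List.nil_append] at hbody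
          rw [chainB_head xn₁.length le_rfl hB hbody] at hceq₂
          exact absurd hceq₂.1 (by simp)
        · exact masterE hBw (by rw [hceq₂.1]; simp) hB hbody
  | cons p ps₁' =>
    obtain ⟨w₁', e₁⟩ := p
    cases ps₂ with
    | nil =>
      exfalso
      rw [decompBody_nil, decompBody_cons] at hbody
      rw [List.map_cons, List.Chain, List.chain_cons] at hceq₁
      rw [List.Chain, List.chain_cons] at hcf₁
      simp only [List.map_nil, List.getLastD_nil] at hgt₂ hxn₂
      rcases hxn₂ with rfl | hB
      · exact absurd hbody (by simp)
      · rcases hcf₁.1 with hw | hBw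
        · simp only at hw
          rw [hw, List.nil_append] at hbody
          rw [chainB_head xn₂.length le_rfl hB hbody.symm] at hceq₁
          exact absurd hceq₁.1 (by simp)
        · exact masterE hBw (by rw [hceq₁.1]; simp) hB hbody.symm
    | cons q ps₂' =>
      obtain ⟨w₂', e₂⟩ := q
      rw [decompBody_cons] at hbody hlen
      rw [decompBody_cons] at hbody
      rw [List.map_cons, List.Chain, List.chain_cons] at hceq₁ hceq₂
      rw [List.Chain, List.chain_cons] at hcf₁ hcf₂
      rw [List.map_cons, List.getLastD_cons] at hgt₁ hxn₁ hgt₂ hxn₂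
      rcases split3 hbody with ⟨rfl, rfl, h5⟩ | ⟨δ, h3, h4⟩ | ⟨δ, h3, h4⟩
      · obtain ⟨h6, h7⟩ := ih (n-1) (by simp at hlen; omega) e₁ ps₁' ps₂' xn₁ xn₂ b w₁' w₁'
          hceq₁.2 hcf₁.2 hgt₁ hxn₁ hceq₂.2 (by exact hcf₂.2) hgt₂ hxn₂ h5
          (by simp at hlen ⊢; omega)
        rw [h6]; exact ⟨rfl, h7⟩
      · exfalso
        subst h3
        have hBw₂ : ChainB M (some a) (w₁' ++ e₁ :: δ) (some e₂) := by
          rcases hcf₂.1 with hw | hBw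
          · exact absurd hw (by simp)
          · exact hBw
        rcases hcf₁.1 with hw | hBw
        · simp only at hw
          subst hw
          have hlt : M (some a) (some e₁) = some PrecRel.lt :=
            chainB_head (List.length _) le_rfl hBw₂
              (show ([] : List T) ++ e₁ :: δ = e₁ :: δ by rfl)
          have heq1 : M (some a) (some e₁) = some PrecRel.eq := hceq₁.1
          rw [heq1] at hlt
          exact absurd hlt (by simp)
        · exact masterE hBw (by rw [hceq₁.1]; simp) hBw₂ rfl
      · exfalso
        subst h3
        have hBw₁ : ChainB M (some a) (w₂' ++ e₂ :: δ) (some e₁) := by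
          rcases hcf₁.1 with hw | hBw
          · exact absurd hw (by simp)
          · exact hBw
        rcases hcf₂.1 with hw | hBw
        · simp only at hw
          subst hw
          have hlt : M (some a) (some e₂) = some PrecRel.lt :=
            chainB_head (List.length _) le_rfl hBw₁
              (show ([] : List T) ++ e₂ :: δ = e₂ :: δ by rfl)
          have heq1 : M (some a) (some e₂) = some PrecRel.eq := hceq₂.1
          rw [heq1] at hlt
          exact absurd hlt (by simp)
        · exact masterE hBw (by rw [hceq₂.1]; simp) hBw₁ rfl

end ChainDecompAux

/-- over a conflict-free precedence alphabet, the decomposition of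
a chain body into `x₀ a₁ x₁ … aₙ xₙ` is unique. -/
theorem chain_decomposition_unique (M : Option T → Option T → Option PrecRel)
    (a₀ b : Option T) (x : List T) (hx : ChainB M a₀ x b)
    (parts₁ parts₂ : List (List T × T)) (xn₁ xn₂ : List T)
    (h₁ : IsDecomp M a₀ parts₁ xn₁ b) (h₂ : IsDecomp M a₀ parts₂ xn₂ b)
    (hb₁ : decompBody parts₁ xn₁ = x) (hb₂ : decompBody parts₂ xn₂ = x) :
    parts₁ = parts₂ ∧ xn₁ = xn₂ := by
  obtain ⟨hsb₁, hhd₁, hch₁, hlast₁⟩ := h₁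
  obtain ⟨hsb₂, hhd₂, hch₂, hlast₂⟩ := h₂
  obtain ⟨hne₁, hMb₁, hHL₁, hcheq₁⟩ := hsb₁
  obtain ⟨hne₂, hMb₂, hHL₂, hcheq₂⟩ := hsb₂
  cases parts₁ with
  | nil => simp at hne₁
  | cons p ps₁ =>
  obtain ⟨x₀, a₁⟩ := p
  cases parts₂ with
  | nil => simp at hne₂
  | cons q ps₂ =>
  obtain ⟨x₀', a₁'⟩ := q
  -- extract components of decomposition 1
  have hHL₁' := hHL₁ (by simp)
  have hgt₁ : M (some ((ps₁.map Prod.snd).getLastD a₁)) b = some PrecRel.gt := by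
    rw [← getLast_cons_eq (ps₁.map Prod.snd) a₁ (by simp)]
    exact hHL₁'.2
  have hceqc₁ : List.Chain (fun x y : T => M (some x) (some y) = some PrecRel.eq) a₁
      (ps₁.map Prod.snd) := by
    rw [List.map_cons] at hcheq₁; exact hcheq₁
  have hfil₁ : x₀ = [] ∨ ChainB M a₀ x₀ (some a₁) := hhd₁ (x₀, a₁) rfl
  have hchf₁ : List.Chain
      (fun p q : List T × T => q.1 = [] ∨ ChainB M (some p.2) q.1 (some q.2))
      (x₀, a₁) ps₁ := hch₁
  have hxnl₁ : xn₁ = [] ∨ ChainB M (some ((ps₁.map Prod.snd).getLastD a₁)) xn₁ b :=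
    hlast₁ _ (by rw [List.map_cons, getLast?_cons_eq])
  -- extract components of decomposition 2
  have hHL₂' := hHL₂ (by simp)
  have hgt₂ : M (some ((ps₂.map Prod.snd).getLastD a₁')) b = some PrecRel.gt := by
    rw [← getLast_cons_eq (ps₂.map Prod.snd) a₁' (by simp)]
    exact hHL₂'.2
  have hceqc₂ : List.Chain (fun x y : T => M (some x) (some y) = some PrecRel.eq) a₁'
      (ps₂.map Prod.snd) := by
    rw [List.map_cons] at hcheq₂; exact hcheq₂
  have hfil₂ : x₀' = [] ∨ ChainB M a₀ x₀' (some a₁') := hhd₂ (x₀', a₁') rfl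
  have hchf₂ : List.Chain
      (fun p q : List T × T => q.1 = [] ∨ ChainB M (some p.2) q.1 (some q.2))
      (x₀', a₁') ps₂ := hch₂
  have hxnl₂ : xn₂ = [] ∨ ChainB M (some ((ps₂.map Prod.snd).getLastD a₁')) xn₂ b :=
    hlast₂ _ (by rw [List.map_cons, getLast?_cons_eq])
  -- compare the two decompositions
  rw [decompBody_cons] at hb₁ hb₂
  have heq : x₀ ++ a₁ :: decompBody ps₁ xn₁ = x₀' ++ a₁' :: decompBody ps₂ xn₂ :=
    hb₁.trans hb₂.symm
  rcases split3 heq with ⟨rfl, rfl, hR⟩ | ⟨δ, h3, h4⟩ | ⟨δ, h3, h4⟩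
  · obtain ⟨hps, hxn⟩ := tail_uniq (decompBody ps₁ xn₁).length a₁ ps₁ ps₂ xn₁ xn₂ b x₀ x₀
      hceqc₁ hchf₁ hgt₁ hxnl₁ hceqc₂ hchf₂ hgt₂ hxnl₂ hR le_rfl
    rw [hps]; exact ⟨rfl, hxn⟩
  · exfalso
    subst h3
    have hBx₀' : ChainB M a₀ (x₀ ++ a₁ :: δ) (some a₁') := by
      rcases hfil₂ with h | h
      · exact absurd h (by simp)
      · exact h
    have hT₁ : ChainT M a₁ (decompBody ps₁ xn₁) b :=
      assembleT ps₁ a₁ x₀ xn₁ b hceqc₁ hchf₁ hgt₁ hxnl₁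
    exact masterD hfil₁ hT₁ hBx₀' heq (by simp)
  · exfalso
    subst h3
    have hBx₀ : ChainB M a₀ (x₀' ++ a₁' :: δ) (some a₁) := by
      rcases hfil₁ with h | h
      · exact absurd h (by simp)
      · exact h
    have hT₂ : ChainT M a₁' (decompBody ps₂ xn₂) b :=
      assembleT ps₂ a₁' x₀' xn₂ b hceqc₂ hchf₂ hgt₂ hxnl₂
    exact masterD hfil₂ hT₂ hBx₀ heq.symm (by simp)
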